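/- Assume K has symmetric support. For all o, x ∈ 𝒳 and all t ≥ diam(𝒳)/4, we have −c·diam(𝒳) ≤ log(P_t(o,x)/π(x)) ≤ log(1/p), where c = 3 log(e/δ), δ is the smallest non-zero entry of K, and p = min_x π(x). -/

import Mathlib

open scoped Classical

noncomputable section

/-- `n`-th power of a kernel `K` on a finite set. -/
def matPow {X : Type*} [Fintype X] [DecidableEq X] (K : X → X → ℝ) : ℕ → X → X → ℝ
  | 0 => fun x y => if x = y then 1 else 0
  | n + 1 => fun x y => ∑ z, matPow K n x z * K z y

/-- `K` is a stochastic matrix with entries in `[0,1]` and rows summing to `1`. -/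
def IsStochastic {X : Type*} [Fintype X] (K : X → X → ℝ) : Prop :=
  (∀ x y, 0 ≤ K x y ∧ K x y ≤ 1) ∧ ∀ x, ∑ y, K x y = 1

/-- Irreducibility: any state can be reached from any state. -/
def IsIrreducibleMatrix {X : Type*} [Fintype X] [DecidableEq X] (K : X → X → ℝ) : Prop :=
  ∀ x y, ∃ n : ℕ, 0 < matPow K n x y

/-- `π` is the (positive) stationary probability vector of `K`. -/
def IsStationaryProb {X : Type*} [Fintype X] (K : X → X → ℝ) (π : X → ℝ) : Prop :=
  (∀ x, 0 < π x) ∧ (∑ x, π x = 1) ∧ ∀ y, ∑ x, π x * K x y = π y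

/-- A probability vector on a finite set. -/
def IsProbVector {X : Type*} [Fintype X] (μ : X → ℝ) : Prop :=
  (∀ x, 0 ≤ μ x) ∧ ∑ x, μ x = 1

/-- Continuous-time heat kernel `P_t(x,y) = e^{-t} ∑ t^n/n! Kⁿ(x,y)`. -/
def heatKernel {X : Type*} [Fintype X] [DecidableEq X] (K : X → X → ℝ) (t : ℝ) (x y : X) : ℝ :=
  Real.exp (-t) * ∑' n : ℕ, t ^ n / (Nat.factorial n : ℝ) * matPow K n x y

/-- Total variation distance between two vectors. -/
def dTV {X : Type*} [Fintype X] (μ ν : X → ℝ) : ℝ := (∑ x, |μ x - ν x|) / 2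

/-- Relative entropy (Kullback–Leibler divergence). -/
def dKL {X : Type*} [Fintype X] (μ ν : X → ℝ) : ℝ := ∑ x, μ x * Real.log (μ x / ν x)

/-- Varentropy. -/
def varKL {X : Type*} [Fintype X] (μ ν : X → ℝ) : ℝ :=
  ∑ x, μ x * (Real.log (μ x / ν x) - dKL μ ν) ^ 2

/-- Worst-case total variation distance to equilibrium at time `t`. -/
def worstTV {X : Type*} [Fintype X] [DecidableEq X] (K : X → X → ℝ) (π : X → ℝ) (t : ℝ) : ℝ :=
  sSup {v : ℝ | ∃ o : X, v = dTV (heatKernel K t o) π}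

/-- Worst-case relative entropy to equilibrium at time `t`. -/
def worstKL {X : Type*} [Fintype X] [DecidableEq X] (K : X → X → ℝ) (π : X → ℝ) (t : ℝ) : ℝ :=
  sSup {v : ℝ | ∃ o : X, v = dKL (heatKernel K t o) π}

/-- Worst-case varentropy at time `t`. -/
def worstVar {X : Type*} [Fintype X] [DecidableEq X] (K : X → X → ℝ) (π : X → ℝ) (t : ℝ) : ℝ :=
  sSup {v : ℝ | ∃ o : X, v = varKL (heatKernel K t o) π}

/-- Mixing time: first time the worst-case TV distance drops below `ε`. -/
def mixingTime {X : Type*} [Fintype X] [DecidableEq X] (K : X → X → ℝ) (π : X → ℝ) (ε : ℝ) : ℝ :=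
  sInf {t : ℝ | 0 ≤ t ∧ worstTV K π t ≤ ε}

/-- Variance of `f` with respect to `π`. -/
def varPi {X : Type*} [Fintype X] (π f : X → ℝ) : ℝ :=
  ∑ x, π x * (f x - ∑ y, π y * f y) ^ 2

/-- Poincaré constant: the largest `γ` with `γ·Var_π(f) ≤ (1/2)∑ π(x)K(x,y)(f(x)-f(y))²`. -/
def poincare {X : Type*} [Fintype X] (K : X → X → ℝ) (π : X → ℝ) : ℝ :=
  sSup {γ : ℝ | ∀ f : X → ℝ, γ * varPi π f ≤ (∑ x, ∑ y, π x * K x y * (f x - f y) ^ 2) / 2}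

/-- Smallest non-zero entry of `K`. -/
def minEntry {X : Type*} [Fintype X] (K : X → X → ℝ) : ℝ :=
  sInf {v : ℝ | (∃ x y, v = K x y) ∧ 0 < v}

/-- Smallest stationary probability `p = min_x π(x)`. -/
def statMin {X : Type*} [Fintype X] (π : X → ℝ) : ℝ :=
  sInf {v : ℝ | ∃ x, v = π x}

/-- The support of `K` is symmetric. -/
def SymmSupport {X : Type*} (K : X → X → ℝ) : Prop :=
  ∀ x y, 0 < K x y → 0 < K y x

/-- Graph distance associated with the support of `K`. -/
def mdist {X : Type*} [Fintype X] [DecidableEq X] (K : X → X → ℝ) (x y : X) : ℕ :=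
  sInf {n : ℕ | 0 < matPow K n x y}

/-- Diameter of the state space for the distance `mdist`. -/
def mdiam {X : Type*} [Fintype X] [DecidableEq X] (K : X → X → ℝ) : ℕ :=
  Finset.sup Finset.univ fun p : X × X => mdist K p.1 p.2

/-- Lipschitz norm of `f` with respect to `mdist`. -/
def lipNorm {X : Type*} [Fintype X] [DecidableEq X] (K : X → X → ℝ) (f : X → ℝ) : ℝ :=
  sSup {v : ℝ | ∃ x y, x ≠ y ∧ v = |f x - f y| / (mdist K x y : ℝ)}

section AuxStmt10

variable {X : Type*} [Fintype X] [DecidableEq X]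

lemma matPow_nonneg {K : X → X → ℝ} (hK : IsStochastic K) (n : ℕ) (x y : X) :
    0 ≤ matPow K n x y := by
  induction n generalizing x y with
  | zero => unfold matPow; split <;> norm_num
  | succ n ih => exact Finset.sum_nonneg fun z _ => mul_nonneg (ih x z) (hK.1 z y).1

lemma matPow_rowsum {K : X → X → ℝ} (hK : IsStochastic K) (n : ℕ) (x : X) :
    ∑ y, matPow K n x y = 1 := by
  induction n generalizing x with
  | zero => simp [matPow]
  | succ n ih =>
    show ∑ y, ∑ z, matPow K n x z * K z y = 1
    rw [Finset.sum_comm]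
    simp only [← Finset.mul_sum, hK.2, mul_one]
    exact ih x

lemma matPow_le_one {K : X → X → ℝ} (hK : IsStochastic K) (n : ℕ) (x y : X) :
    matPow K n x y ≤ 1 := by
  have := Finset.single_le_sum (f := fun y => matPow K n x y)
    (fun z _ => matPow_nonneg hK n x z) (Finset.mem_univ y)
  rwa [matPow_rowsum hK n x] at this

lemma matPow_stationary {K : X → X → ℝ} {π : X → ℝ} (hπ : IsStationaryProb K π) (n : ℕ) (y : X) :
    ∑ x, π x * matPow K n x y = π y := by
  induction n generalizing y with
  | zero => simp [matPow, mul_ite]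
  | succ n ih =>
    show ∑ x, π x * ∑ z, matPow K n x z * K z y = π y
    simp only [Finset.mul_sum]
    rw [Finset.sum_comm]
    calc ∑ z, ∑ x, π x * (matPow K n x z * K z y)
        = ∑ z, (∑ x, π x * matPow K n x z) * K z y := by
          congr 1; ext z; rw [Finset.sum_mul]; congr 1; ext x; ring
      _ = ∑ z, π z * K z y := by simp [ih]
      _ = π y := hπ.2.2 y

lemma matPow_add (K : X → X → ℝ) (a b : ℕ) (x y : X) :
    matPow K (a + b) x y = ∑ z, matPow K a x z * matPow K b z y := by
  induction b generalizing y with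
  | zero => simp [matPow, mul_ite]
  | succ b ih =>
    show matPow K ((a + b) + 1) x y = _
    calc matPow K ((a+b)+1) x y = ∑ z, matPow K (a+b) x z * K z y := rfl
      _ = ∑ z, (∑ w, matPow K a x w * matPow K b w z) * K z y := by simp [ih]
      _ = ∑ w, matPow K a x w * ∑ z, matPow K b w z * K z y := by
          simp_rw [Finset.sum_mul, Finset.mul_sum]
          rw [Finset.sum_comm]
          apply Finset.sum_congr rfl; intro w _
          apply Finset.sum_congr rfl; intro z _
          ring
      _ = ∑ z, matPow K a x z * matPow K (b+1) z y := rfl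

lemma matPow_mul_le {K : X → X → ℝ} (hK : IsStochastic K) (a b : ℕ) (x z y : X) :
    matPow K a x z * matPow K b z y ≤ matPow K (a + b) x y := by
  rw [matPow_add]
  exact Finset.single_le_sum
    (f := fun w => matPow K a x w * matPow K b w y)
    (fun w _ => mul_nonneg (matPow_nonneg hK a x w) (matPow_nonneg hK b w y))
    (Finset.mem_univ z)

lemma minEntry_mem {K : X → X → ℝ} (hK : IsStochastic K) (x0 : X) :
    minEntry K ∈ {v : ℝ | (∃ x y, v = K x y) ∧ 0 < v} := by
  have hfin : Set.Finite {v : ℝ | (∃ x y, v = K x y) ∧ 0 < v} := by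
    apply Set.Finite.subset (Set.finite_range fun p : X × X => K p.1 p.2)
    rintro v ⟨⟨x, y, rfl⟩, -⟩
    exact ⟨(x, y), rfl⟩
  have hne : Set.Nonempty {v : ℝ | (∃ x y, v = K x y) ∧ 0 < v} := by
    by_contra h
    rw [Set.not_nonempty_iff_eq_empty] at h
    have : ∀ y, K x0 y = 0 := by
      intro y
      by_contra hy
      have hpos : 0 < K x0 y := lt_of_le_of_ne (hK.1 x0 y).1 (Ne.symm hy)
      have : K x0 y ∈ {v : ℝ | (∃ x y, v = K x y) ∧ 0 < v} := ⟨⟨x0, y, rfl⟩, hpos⟩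
      rw [h] at this; exact this
    have hsum := hK.2 x0
    rw [Finset.sum_congr rfl (fun y _ => this y)] at hsum
    simp at hsum
  exact Set.Nonempty.csInf_mem hne hfin

lemma minEntry_pos {K : X → X → ℝ} (hK : IsStochastic K) (x0 : X) : 0 < minEntry K :=
  (minEntry_mem hK x0).2

lemma minEntry_le_one {K : X → X → ℝ} (hK : IsStochastic K) (x0 : X) : minEntry K ≤ 1 := by
  obtain ⟨⟨x, y, hxy⟩, -⟩ := minEntry_mem hK x0
  rw [hxy]; exact (hK.1 x y).2

lemma minEntry_le {K : X → X → ℝ} (x y : X) (h : 0 < K x y) : minEntry K ≤ K x y := by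
  apply csInf_le
  · apply Set.Finite.bddBelow
    apply Set.Finite.subset (Set.finite_range fun p : X × X => K p.1 p.2)
    rintro v ⟨⟨x, y, rfl⟩, -⟩
    exact ⟨(x, y), rfl⟩
  · exact ⟨⟨x, y, rfl⟩, h⟩

lemma matPow_ge_pow {K : X → X → ℝ} (hK : IsStochastic K) (n : ℕ) (x y : X)
    (h : 0 < matPow K n x y) : minEntry K ^ n ≤ matPow K n x y := by
  induction n generalizing x y with
  | zero =>
    have hxy : x = y := by
      by_contra hxy
      unfold matPow at h
      rw [if_neg hxy] at h
      norm_num at h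
    subst hxy
    unfold matPow
    simp
  | succ n ih =>
    have hsum : matPow K (n+1) x y = ∑ z, matPow K n x z * K z y := rfl
    rw [hsum] at h
    obtain ⟨z, -, hz⟩ := Finset.exists_ne_zero_of_sum_ne_zero h.ne'
    have hz' : 0 < matPow K n x z * K z y := by
      rcases lt_or_eq_of_le (mul_nonneg (matPow_nonneg hK n x z) (hK.1 z y).1) with h' | h'
      · exact h'
      · exact absurd h'.symm hz
    have h1 : 0 < matPow K n x z := by
      rcases mul_pos_iff.mp hz' with ⟨ha, hb⟩ | ⟨ha, hb⟩
      · exact ha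
      · exact absurd hb (not_lt.mpr (hK.1 z y).1)
    have h2 : 0 < K z y := by
      rcases mul_pos_iff.mp hz' with ⟨ha, hb⟩ | ⟨ha, hb⟩
      · exact hb
      · exact absurd ha (not_lt.mpr (matPow_nonneg hK n x z))
    calc minEntry K ^ (n+1) = minEntry K ^ n * minEntry K := by ring
      _ ≤ matPow K n x z * K z y := by
          apply mul_le_mul (ih x z h1) (minEntry_le z y h2)
            (le_of_lt (minEntry_pos hK x)) (matPow_nonneg hK n x z)
      _ ≤ ∑ z, matPow K n x z * K z y :=
          Finset.single_le_sum
            (fun w _ => mul_nonneg (matPow_nonneg hK n x w) (hK.1 w y).1)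
            (Finset.mem_univ z)
      _ = matPow K (n+1) x y := rfl

lemma hk_summable {K : X → X → ℝ} (hK : IsStochastic K) {t : ℝ} (ht : 0 ≤ t) (x y : X) :
    Summable (fun n : ℕ => t ^ n / (Nat.factorial n : ℝ) * matPow K n x y) := by
  apply Summable.of_nonneg_of_le
    (fun n => mul_nonneg (by positivity) (matPow_nonneg hK n x y))
    (fun n => ?_) (Real.summable_pow_div_factorial t)
  calc t ^ n / (Nat.factorial n : ℝ) * matPow K n x y
      ≤ t ^ n / (Nat.factorial n : ℝ) * 1 := by
        apply mul_le_mul_of_nonneg_left (matPow_le_one hK n x y) (by positivity)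
    _ = t ^ n / (Nat.factorial n : ℝ) := mul_one _

lemma exp_eq_tsum_real (t : ℝ) : Real.exp t = ∑' n : ℕ, t ^ n / (Nat.factorial n : ℝ) := by
  rw [Real.exp_eq_exp_ℝ, NormedSpace.exp_eq_tsum_div]

lemma heatKernel_nonneg {K : X → X → ℝ} (hK : IsStochastic K) {t : ℝ} (ht : 0 ≤ t) (x y : X) :
    0 ≤ heatKernel K t x y := by
  unfold heatKernel
  apply mul_nonneg (Real.exp_nonneg _)
  exact tsum_nonneg fun n => mul_nonneg (by positivity) (matPow_nonneg hK n x y)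

lemma heatKernel_le_one {K : X → X → ℝ} (hK : IsStochastic K) {t : ℝ} (ht : 0 ≤ t) (x y : X) :
    heatKernel K t x y ≤ 1 := by
  unfold heatKernel
  have h1 : (∑' n : ℕ, t ^ n / (Nat.factorial n : ℝ) * matPow K n x y) ≤ Real.exp t := by
    rw [exp_eq_tsum_real]
    apply Summable.tsum_le_tsum _ (hk_summable hK ht x y) (Real.summable_pow_div_factorial t)
    intro n
    calc t ^ n / (Nat.factorial n : ℝ) * matPow K n x y
        ≤ t ^ n / (Nat.factorial n : ℝ) * 1 := by
          apply mul_le_mul_of_nonneg_left (matPow_le_one hK n x y) (by positivity)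
      _ = t ^ n / (Nat.factorial n : ℝ) := mul_one _
  calc Real.exp (-t) * ∑' n : ℕ, t ^ n / (Nat.factorial n : ℝ) * matPow K n x y
      ≤ Real.exp (-t) * Real.exp t := by
        apply mul_le_mul_of_nonneg_left h1 (Real.exp_nonneg _)
    _ = 1 := by rw [← Real.exp_add]; simp

lemma heatKernel_ge_term {K : X → X → ℝ} (hK : IsStochastic K) {t : ℝ} (ht : 0 ≤ t)
    (x y : X) (n : ℕ) :
    Real.exp (-t) * (t ^ n / (Nat.factorial n : ℝ) * matPow K n x y) ≤ heatKernel K t x y := by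
  unfold heatKernel
  apply mul_le_mul_of_nonneg_left _ (Real.exp_nonneg _)
  exact Summable.le_tsum (hk_summable hK ht x y) n
    (fun m _ => mul_nonneg (by positivity) (matPow_nonneg hK m x y))

lemma heatKernel_pos {K : X → X → ℝ} (hK : IsStochastic K) (hirr : IsIrreducibleMatrix K)
    {t : ℝ} (ht : 0 < t) (x y : X) : 0 < heatKernel K t x y := by
  obtain ⟨n, hn⟩ := hirr x y
  have := heatKernel_ge_term hK ht.le x y n
  have hterm : 0 < Real.exp (-t) * (t ^ n / (Nat.factorial n : ℝ) * matPow K n x y) := by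
    apply mul_pos (Real.exp_pos _)
    apply mul_pos _ hn
    positivity
  linarith

lemma heatKernel_stationary {K : X → X → ℝ} {π : X → ℝ}
    (hK : IsStochastic K) (hπ : IsStationaryProb K π) {u : ℝ} (hu : 0 ≤ u) (y : X) :
    ∑ z, π z * heatKernel K u z y = π y := by
  unfold heatKernel
  have h1 : ∀ z : X, π z * (Real.exp (-u) * ∑' n : ℕ, u ^ n / (Nat.factorial n : ℝ) * matPow K n z y)
      = ∑' n : ℕ, π z * Real.exp (-u) * (u ^ n / (Nat.factorial n : ℝ) * matPow K n z y) := by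
    intro z
    rw [← tsum_mul_left, ← tsum_mul_left]
    congr 1; ext n; ring
  simp only [h1]
  rw [← Summable.tsum_finsetSum (fun z _ => ((hk_summable hK hu z y).mul_left _))]
  have h2 : ∀ n : ℕ, ∑ z, π z * Real.exp (-u) * (u ^ n / (Nat.factorial n : ℝ) * matPow K n z y)
      = Real.exp (-u) * (u ^ n / (Nat.factorial n : ℝ)) * π y := by
    intro n
    calc ∑ z, π z * Real.exp (-u) * (u ^ n / (Nat.factorial n : ℝ) * matPow K n z y)
        = Real.exp (-u) * (u ^ n / (Nat.factorial n : ℝ)) * ∑ z, π z * matPow K n z y := by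
          rw [Finset.mul_sum]; congr 1; ext z; ring
      _ = Real.exp (-u) * (u ^ n / (Nat.factorial n : ℝ)) * π y := by
          rw [matPow_stationary hπ]
  calc (∑' n : ℕ, ∑ z, π z * Real.exp (-u) * (u ^ n / (Nat.factorial n : ℝ) * matPow K n z y))
      = ∑' n : ℕ, Real.exp (-u) * (u ^ n / (Nat.factorial n : ℝ)) * π y := by
        congr 1; ext n; exact h2 n
    _ = (∑' n : ℕ, u ^ n / (Nat.factorial n : ℝ)) * (Real.exp (-u) * π y) := by
        rw [← tsum_mul_right]
        congr 1; ext n; ring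
    _ = π y := by
        rw [← exp_eq_tsum_real, ← mul_assoc, ← Real.exp_add]
        simp

lemma binom_aux (s u : ℝ) (n : ℕ) :
    ∑ kl ∈ Finset.HasAntidiagonal.antidiagonal n, s ^ kl.1 / (Nat.factorial kl.1 : ℝ) *
      (u ^ kl.2 / (Nat.factorial kl.2 : ℝ)) = (s + u) ^ n / (Nat.factorial n : ℝ) := by
  rw [Finset.Nat.sum_antidiagonal_eq_sum_range_succ_mk, add_pow, Finset.sum_div]
  apply Finset.sum_congr rfl
  intro k hk
  have hkn : k ≤ n := Nat.lt_succ_iff.mp (Finset.mem_range.mp hk)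
  have hfact := Nat.choose_mul_factorial_mul_factorial hkn
  have hfact' : ((n.choose k : ℝ)) * (Nat.factorial k : ℝ) * (Nat.factorial (n-k) : ℝ)
      = (Nat.factorial n : ℝ) := by exact_mod_cast congrArg (Nat.cast (R := ℝ)) hfact
  have h1 : (Nat.factorial k : ℝ) ≠ 0 := Nat.cast_ne_zero.mpr (Nat.factorial_ne_zero k)
  have h2 : (Nat.factorial (n-k) : ℝ) ≠ 0 := Nat.cast_ne_zero.mpr (Nat.factorial_ne_zero (n-k))
  have h3 : (Nat.factorial n : ℝ) ≠ 0 := Nat.cast_ne_zero.mpr (Nat.factorial_ne_zero n)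
  field_simp
  rw [← hfact']
  ring

lemma heatKernel_mul_le {K : X → X → ℝ} (hK : IsStochastic K)
    {s u : ℝ} (hs : 0 ≤ s) (hu : 0 ≤ u) (x z y : X) :
    heatKernel K s x z * heatKernel K u z y ≤ heatKernel K (s + u) x y := by
  unfold heatKernel
  set f : ℕ → ℝ := fun a => s ^ a / (Nat.factorial a : ℝ) * matPow K a x z with hf
  set g : ℕ → ℝ := fun b => u ^ b / (Nat.factorial b : ℝ) * matPow K b z y with hg
  have hfs : Summable f := hk_summable hK hs x z
  have hgs : Summable g := hk_summable hK hu z y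
  have hfn : ∀ a, 0 ≤ f a := fun a => mul_nonneg (by positivity) (matPow_nonneg hK a x z)
  have hgn : ∀ b, 0 ≤ g b := fun b => mul_nonneg (by positivity) (matPow_nonneg hK b z y)
  have hfnorm : Summable fun a => ‖f a‖ := by
    apply hfs.congr; intro a; exact (Real.norm_of_nonneg (hfn a)).symm
  have hgnorm : Summable fun b => ‖g b‖ := by
    apply hgs.congr; intro b; exact (Real.norm_of_nonneg (hgn b)).symm
  have hcauchy := tsum_mul_tsum_eq_tsum_sum_antidiagonal_of_summable_norm hfnorm hgnorm
  have key : (∑' n, ∑ kl ∈ Finset.HasAntidiagonal.antidiagonal n, f kl.1 * g kl.2)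
      ≤ ∑' n : ℕ, (s+u) ^ n / (Nat.factorial n : ℝ) * matPow K n x y := by
    apply Summable.tsum_le_tsum _ ((summable_norm_sum_mul_antidiagonal_of_summable_norm hfnorm hgnorm).of_norm)
      (hk_summable hK (by linarith) x y)
    intro n
    calc ∑ kl ∈ Finset.HasAntidiagonal.antidiagonal n, f kl.1 * g kl.2
        ≤ ∑ kl ∈ Finset.HasAntidiagonal.antidiagonal n,
            s ^ kl.1 / (Nat.factorial kl.1 : ℝ) * (u ^ kl.2 / (Nat.factorial kl.2 : ℝ))
            * matPow K n x y := by
          apply Finset.sum_le_sum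
          intro kl hkl
          have hklsum : kl.1 + kl.2 = n := Finset.HasAntidiagonal.mem_antidiagonal.mp hkl
          have := matPow_mul_le hK kl.1 kl.2 x z y
          rw [hklsum] at this
          calc f kl.1 * g kl.2
              = s ^ kl.1 / (Nat.factorial kl.1 : ℝ) * (u ^ kl.2 / (Nat.factorial kl.2 : ℝ))
                * (matPow K kl.1 x z * matPow K kl.2 z y) := by rw [hf, hg]; ring
            _ ≤ s ^ kl.1 / (Nat.factorial kl.1 : ℝ) * (u ^ kl.2 / (Nat.factorial kl.2 : ℝ))
                * matPow K n x y := by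
                apply mul_le_mul_of_nonneg_left this (by positivity)
      _ = (s+u) ^ n / (Nat.factorial n : ℝ) * matPow K n x y := by
          rw [← Finset.sum_mul, binom_aux]
  calc Real.exp (-s) * (∑' n, f n) * (Real.exp (-u) * ∑' n, g n)
      = Real.exp (-(s+u)) * ((∑' n, f n) * (∑' n, g n)) := by
        rw [neg_add, Real.exp_add]; ring
    _ = Real.exp (-(s+u)) * ∑' n, ∑ kl ∈ Finset.HasAntidiagonal.antidiagonal n, f kl.1 * g kl.2 := by
        rw [hcauchy]
    _ ≤ Real.exp (-(s+u)) * ∑' n : ℕ, (s+u) ^ n / (Nat.factorial n : ℝ) * matPow K n x y := by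
        apply mul_le_mul_of_nonneg_left key (Real.exp_nonneg _)

lemma statMin_mem {π : X → ℝ} (x0 : X) : statMin π ∈ {v : ℝ | ∃ x, v = π x} := by
  have hne : Set.Nonempty {v : ℝ | ∃ x, v = π x} := ⟨π x0, x0, rfl⟩
  have hfin : Set.Finite {v : ℝ | ∃ x, v = π x} := by
    apply Set.Finite.subset (Set.finite_range π)
    rintro v ⟨x, rfl⟩
    exact ⟨x, rfl⟩
  exact hne.csInf_mem hfin

lemma statMin_le {π : X → ℝ} (x : X) : statMin π ≤ π x := by
  have hmem : π x ∈ {v : ℝ | ∃ x, v = π x} := ⟨x, rfl⟩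
  apply csInf_le _ hmem
  apply Set.Finite.bddBelow
  apply Set.Finite.subset (Set.finite_range π)
  rintro v ⟨x, rfl⟩
  exact ⟨x, rfl⟩

lemma mdist_spec {K : X → X → ℝ} (hirr : IsIrreducibleMatrix K) (x y : X) :
    0 < matPow K (mdist K x y) x y := by
  have : {n : ℕ | 0 < matPow K n x y}.Nonempty := hirr x y
  exact Nat.sInf_mem this

lemma mdist_le_mdiam (K : X → X → ℝ) (x y : X) : mdist K x y ≤ mdiam K :=
  Finset.le_sup (f := fun p : X × X => mdist K p.1 p.2) (Finset.mem_univ (x, y))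

lemma mdiam_pos (K : X → X → ℝ) (hcard : 2 ≤ Fintype.card X)
    (hirr : IsIrreducibleMatrix K) : 1 ≤ mdiam K := by
  classical
  obtain ⟨a, b, hab⟩ := Fintype.exists_pair_of_one_lt_card (α := X) (by omega)
  have h1 : 1 ≤ mdist K a b := by
    by_contra h
    push_neg at h
    interval_cases h' : mdist K a b
    · have := mdist_spec hirr a b
      rw [h'] at this
      unfold matPow at this
      rw [if_neg hab] at this
      norm_num at this
  exact le_trans h1 (mdist_le_mdiam K a b)

end AuxStmt10

/-- Uniform heat-kernel estimate. -/
theorem stmt_10 {X : Type*} [Fintype X] [DecidableEq X]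
    (hcard : 2 ≤ Fintype.card X)
    (K : X → X → ℝ) (π : X → ℝ)
    (hK : IsStochastic K) (hirr : IsIrreducibleMatrix K) (hπ : IsStationaryProb K π)
    (hsym : SymmSupport K)
    (o x : X) (t : ℝ) (ht : (mdiam K : ℝ) / 4 ≤ t) :
    -(3 * Real.log (Real.exp 1 / minEntry K)) * (mdiam K : ℝ) ≤
        Real.log (heatKernel K t o x / π x) ∧
      Real.log (heatKernel K t o x / π x) ≤ Real.log (1 / statMin π) := by
  have hD1 : 1 ≤ mdiam K := mdiam_pos K hcard hirr
  set D : ℕ := mdiam K with hDdef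
  have hD1' : (1:ℝ) ≤ (D:ℝ) := by exact_mod_cast hD1
  have ht0 : 0 < t := lt_of_lt_of_le (by linarith) ht
  have hδpos : 0 < minEntry K := minEntry_pos hK o
  have hδ1 : minEntry K ≤ 1 := minEntry_le_one hK o
  have hπx : 0 < π x := hπ.1 x
  have hPpos : 0 < heatKernel K t o x := heatKernel_pos hK hirr ht0 o x
  have hratio_pos : 0 < heatKernel K t o x / π x := div_pos hPpos hπx
  constructor
  · -- lower bound
    set s : ℝ := (D:ℝ)/4 with hsdef
    have hs0 : 0 ≤ s := by positivity
    have hu0 : 0 ≤ t - s := by simp only [hsdef]; linarith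
    obtain ⟨z, -, hz⟩ := Finset.exists_max_image Finset.univ
      (fun w => heatKernel K (t - s) w x) ⟨x, Finset.mem_univ x⟩
    have hπle : π x ≤ heatKernel K (t-s) z x := by
      calc π x = ∑ w, π w * heatKernel K (t-s) w x :=
            (heatKernel_stationary hK hπ hu0 x).symm
        _ ≤ ∑ w, π w * heatKernel K (t-s) z x :=
            Finset.sum_le_sum fun w _ =>
              mul_le_mul_of_nonneg_left (hz w (Finset.mem_univ w)) (hπ.1 w).le
        _ = heatKernel K (t-s) z x := by rw [← Finset.sum_mul, hπ.2.1, one_mul]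
    set d : ℕ := mdist K o z with hddef
    have hdD : d ≤ D := mdist_le_mdiam K o z
    have hdD' : (d:ℝ) ≤ (D:ℝ) := by exact_mod_cast hdD
    have hKd : minEntry K ^ d ≤ matPow K d o z := matPow_ge_pow hK d o z (mdist_spec hirr o z)
    set A : ℝ := Real.exp (-s) * (s ^ d / (Nat.factorial d : ℝ) * minEntry K ^ d) with hAdef
    have hPs : A ≤ heatKernel K s o z := by
      refine le_trans ?_ (heatKernel_ge_term hK hs0 o z d)
      rw [hAdef]
      gcongr
    have hmain : heatKernel K s o z * heatKernel K (t-s) z x ≤ heatKernel K t o x := by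
      have h := heatKernel_mul_le hK hs0 hu0 o z x
      rwa [add_sub_cancel] at h
    have hAd : A * π x ≤ heatKernel K t o x := by
      calc A * π x ≤ heatKernel K s o z * heatKernel K (t-s) z x :=
            mul_le_mul hPs hπle hπx.le (heatKernel_nonneg hK hs0 o z)
        _ ≤ heatKernel K t o x := hmain
    have hAratio : A ≤ heatKernel K t o x / π x := (le_div_iff₀ hπx).mpr hAd
    -- numeric estimate
    have hfactd : (0:ℝ) < (Nat.factorial d : ℝ) := by
      exact_mod_cast Nat.factorial_pos d
    have hs_df : (1/4:ℝ)^D ≤ s ^ d / (Nat.factorial d : ℝ) := by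
      rcases Nat.eq_zero_or_pos d with hd0 | hdpos
      · rw [hd0]
        simp only [pow_zero, Nat.factorial_zero, Nat.cast_one, div_one]
        exact pow_le_one₀ (by norm_num) (by norm_num)
      · have hd4 : ((d:ℝ)/4)^d ≤ s^d := by
          apply pow_le_pow_left₀ (by positivity)
          rw [hsdef]
          linarith
        have hfact : (Nat.factorial d : ℝ) ≤ (d:ℝ)^d := by
          exact_mod_cast Nat.factorial_le_pow d
        have hdpow : (0:ℝ) < (d:ℝ)^d := by
          have : (0:ℝ) < (d:ℝ) := by exact_mod_cast hdpos
          positivity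
        have h1 : ((d:ℝ)/4)^d / (d:ℝ)^d ≤ s^d / (Nat.factorial d : ℝ) :=
          div_le_div₀ (by positivity) hd4 hfactd hfact
        have heq : ((d:ℝ)/4)^d / (d:ℝ)^d = (1/4:ℝ)^d := by
          rw [← div_pow]
          congr 1
          have hdne : (d:ℝ) ≠ 0 := by
            have : (0:ℝ) < (d:ℝ) := by exact_mod_cast hdpos
            linarith
          field_simp
        have hmono : (1/4:ℝ)^D ≤ (1/4:ℝ)^d :=
          pow_le_pow_of_le_one (by norm_num) (by norm_num) hdD
        rw [heq] at h1
        linarith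
    have hδmono : minEntry K ^ (3*D) ≤ minEntry K ^ d :=
      pow_le_pow_of_le_one hδpos.le hδ1 (by omega)
    have hbase : Real.exp (-(11/4 : ℝ)) ≤ 1/4 := by
      have h1 : (19:ℝ)/8 ≤ Real.exp (11/8) := by
        have := Real.add_one_le_exp ((11:ℝ)/8); linarith
      have h2 : Real.exp (11/4 : ℝ) = Real.exp (11/8) * Real.exp (11/8) := by
        rw [← Real.exp_add]; norm_num
      have h3 : (4:ℝ) ≤ Real.exp (11/4) := by
        rw [h2]; nlinarith [Real.exp_pos ((11:ℝ)/8)]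
      rw [Real.exp_neg]
      rw [show (1/4 : ℝ) = (4:ℝ)⁻¹ by norm_num]
      exact inv_anti₀ (by norm_num) h3
    have hexp : Real.exp (-(3*(D:ℝ))) ≤ Real.exp (-s) * (1/4:ℝ)^D := by
      have heq : Real.exp (-(3*(D:ℝ))) = Real.exp (-s) * Real.exp (s - 3*(D:ℝ)) := by
        rw [← Real.exp_add]; ring_nf
      rw [heq]
      apply mul_le_mul_of_nonneg_left _ (Real.exp_nonneg _)
      have heq2 : s - 3*(D:ℝ) = (D:ℝ) * (-(11/4)) := by rw [hsdef]; ring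
      rw [heq2, Real.exp_nat_mul]
      exact pow_le_pow_left₀ (Real.exp_nonneg _) hbase D
    have hexp_eq : Real.exp (-(3 * Real.log (Real.exp 1 / minEntry K)) * (D:ℝ))
        = Real.exp (-(3*(D:ℝ))) * minEntry K ^ (3*D) := by
      have hc : -(3 * Real.log (Real.exp 1 / minEntry K)) * (D:ℝ)
          = -(3*(D:ℝ)) + ((3*D : ℕ):ℝ) * Real.log (minEntry K) := by
        rw [Real.log_div (Real.exp_ne_zero 1) hδpos.ne', Real.log_exp]
        push_cast
        ring
      rw [hc, Real.exp_add, Real.exp_nat_mul, Real.exp_log hδpos]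
    have hfinal : Real.exp (-(3 * Real.log (Real.exp 1 / minEntry K)) * (D:ℝ)) ≤ A := by
      rw [hexp_eq, hAdef]
      calc Real.exp (-(3*(D:ℝ))) * minEntry K ^ (3*D)
          ≤ (Real.exp (-s) * (1/4:ℝ)^D) * minEntry K ^ (3*D) := by
            apply mul_le_mul_of_nonneg_right hexp (by positivity)
        _ ≤ (Real.exp (-s) * (s ^ d / (Nat.factorial d : ℝ))) * minEntry K ^ d := by
            apply mul_le_mul _ hδmono (by positivity) (by positivity)
            exact mul_le_mul_of_nonneg_left hs_df (Real.exp_nonneg _)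
        _ = Real.exp (-s) * (s ^ d / (Nat.factorial d : ℝ) * minEntry K ^ d) := by ring
    have : Real.exp (-(3 * Real.log (Real.exp 1 / minEntry K)) * (D:ℝ))
        ≤ heatKernel K t o x / π x := le_trans hfinal hAratio
    exact (Real.le_log_iff_exp_le hratio_pos).mpr this
  · -- upper bound
    obtain ⟨x0, hx0⟩ := statMin_mem (π := π) x
    have hsm_pos : 0 < statMin π := by rw [hx0]; exact hπ.1 x0
    have h1 : heatKernel K t o x / π x ≤ 1 / statMin π := by
      apply div_le_div₀ (by positivity) (heatKernel_le_one hK ht0.le o x) hsm_pos (statMin_le x)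
    exact Real.log_le_log hratio_pos h1
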